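/- No strict partition admits a removable double k-ribbon whose two single-ribbon components have equal size; i.e., if λ∖ν is a removable double k-ribbon with components R and S, then |R| > |S| (so k cannot be split as (t,t)). -/

import Mathlib

def IsStrictPartition (s : Finset ℕ) : Prop := ∀ x ∈ s, 0 < x

/-- The `i`-th largest part of `s` (1-indexed); `0` if out of range. -/
def nthPart (s : Finset ℕ) (i : ℕ) : ℕ := (s.sort (· ≤ ·)).reverse.getD (i - 1) 0

/-- The shifted diagram: row `i` (1-indexed) has cells `(i, j)` with `i ≤ j ≤ i + λᵢ - 1`. -/
def shiftedDiagram (s : Finset ℕ) : Set (ℕ × ℕ) :=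
  {c | 1 ≤ c.1 ∧ c.1 ≤ c.2 ∧ c.2 + 1 ≤ c.1 + nthPart s c.1}

def skewDiag (lam nu : Finset ℕ) : Set (ℕ × ℕ) := shiftedDiagram lam \ shiftedDiagram nu

/-- Diagonal value `j - i + 1` of a cell `(i, j)`. -/
def diagVal (c : ℕ × ℕ) : ℕ := c.2 + 1 - c.1

def CellAdj (c d : ℕ × ℕ) : Prop :=
  (c.1 = d.1 ∧ (c.2 + 1 = d.2 ∨ d.2 + 1 = c.2)) ∨
  (c.2 = d.2 ∧ (c.1 + 1 = d.1 ∨ d.1 + 1 = c.1))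

def EdgeConnected (S : Set (ℕ × ℕ)) : Prop :=
  ∀ c ∈ S, ∀ d ∈ S, Relation.ReflTransGen (fun x y => CellAdj x y ∧ x ∈ S ∧ y ∈ S) c d

def IsHead (S : Set (ℕ × ℕ)) (c : ℕ × ℕ) : Prop :=
  c ∈ S ∧ ∀ d ∈ S, diagVal d ≤ diagVal c

def IsTail (S : Set (ℕ × ℕ)) (c : ℕ × ℕ) : Prop :=
  c ∈ S ∧ ∀ d ∈ S, diagVal c ≤ diagVal d

def IsRemovableSingleRibbon (lam nu : Finset ℕ) (k : ℕ) : Prop :=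
  IsStrictPartition lam ∧ IsStrictPartition nu ∧
  shiftedDiagram nu ⊆ shiftedDiagram lam ∧
  (skewDiag lam nu).ncard = k ∧
  EdgeConnected (skewDiag lam nu) ∧
  Set.InjOn diagVal (skewDiag lam nu)

def IsDoubleDecomp (lam nu : Finset ℕ) (R S : Set (ℕ × ℕ)) : Prop :=
  IsStrictPartition lam ∧ IsStrictPartition nu ∧
  shiftedDiagram nu ⊆ shiftedDiagram lam ∧
  Disjoint R S ∧ R ∪ S = skewDiag lam nu ∧
  R.Nonempty ∧ EdgeConnected R ∧ Set.InjOn diagVal R ∧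
  S.Nonempty ∧ EdgeConnected S ∧ Set.InjOn diagVal S ∧
  S.ncard ≤ R.ncard ∧
  (∃ a, IsTail R (a, a)) ∧ (∃ b, IsTail S (b, b)) ∧
  (∃ mu : Finset ℕ, IsStrictPartition mu ∧ shiftedDiagram mu = shiftedDiagram lam \ R)

def IsRemovableDoubleRibbon (lam nu : Finset ℕ) (k : ℕ) : Prop :=
  (skewDiag lam nu).ncard = k ∧ ∃ R S, IsDoubleDecomp lam nu R S

def IsRemovableRibbon (lam nu : Finset ℕ) (k : ℕ) : Prop :=
  IsRemovableSingleRibbon lam nu k ∨ IsRemovableDoubleRibbon lam nu k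


section Stmt3Aux

lemma nthPart_pos_le_card (s : Finset ℕ) (i : ℕ) (h : 0 < nthPart s i) : i ≤ s.card := by
  by_contra hc
  push_neg at hc
  have hlen : (s.sort (· ≤ ·)).reverse.length ≤ i - 1 := by
    rw [List.length_reverse, Finset.length_sort]; omega
  unfold nthPart at h
  rw [List.getD_eq_default _ _ hlen] at h
  omega

lemma nthPart_le_sup (s : Finset ℕ) (i : ℕ) : nthPart s i ≤ s.sup id := by
  unfold nthPart
  rcases lt_or_ge (i - 1) (s.sort (· ≤ ·)).reverse.length with h | h
  · rw [List.getD_eq_getElem _ _ h]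
    have hm : (s.sort (· ≤ ·)).reverse[i-1] ∈ (s.sort (· ≤ ·)).reverse := List.getElem_mem _
    rw [List.mem_reverse, Finset.mem_sort] at hm
    exact Finset.le_sup (f := id) hm
  · rw [List.getD_eq_default _ _ h]
    exact Nat.zero_le _

lemma sortRev_pairwise (s : Finset ℕ) : (s.sort (· ≤ ·)).reverse.Pairwise (· > ·) := by
  rw [List.pairwise_reverse]
  exact s.sortedLT_sort.pairwise

lemma nthPart_anti (s : Finset ℕ) {i j : ℕ} (hij : i ≤ j) : nthPart s j ≤ nthPart s i := by
  unfold nthPart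
  set l := (s.sort (· ≤ ·)).reverse with hl
  have hp : l.Pairwise (· > ·) := by rw [hl]; exact sortRev_pairwise s
  rcases lt_or_ge (j - 1) l.length with h | h
  · have hi : i - 1 < l.length := by omega
    rw [List.getD_eq_getElem _ _ h, List.getD_eq_getElem _ _ hi]
    rcases eq_or_lt_of_le (Nat.sub_le_sub_right hij 1) with he | hlt
    · simp [he]
    · exact le_of_lt (List.pairwise_iff_getElem.mp hp _ _ hi h hlt)
  · rw [List.getD_eq_default _ _ h]
    exact Nat.zero_le _

lemma nthPart_injOn (s : Finset ℕ) {i j : ℕ} (hpos : 0 < nthPart s i)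
    (heq : nthPart s i = nthPart s j) : i - 1 = j - 1 := by
  unfold nthPart at hpos heq
  set l := (s.sort (· ≤ ·)).reverse with hl
  have hi : i - 1 < l.length := by
    by_contra hc; push_neg at hc; rw [List.getD_eq_default _ _ hc] at hpos; omega
  have hj : j - 1 < l.length := by
    by_contra hc; push_neg at hc
    rw [List.getD_eq_default _ _ hc, List.getD_eq_getElem _ _ hi] at heq
    rw [List.getD_eq_getElem _ _ hi] at hpos; omega
  have hp : l.Pairwise (· > ·) := by rw [hl]; exact sortRev_pairwise s
  rw [List.getD_eq_getElem _ _ hi, List.getD_eq_getElem _ _ hj] at heq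
  by_contra hne
  rcases Nat.lt_or_ge (i - 1) (j - 1) with hlt | hge
  · have := List.pairwise_iff_getElem.mp hp _ _ hi hj hlt
    omega
  · have hlt : j - 1 < i - 1 := by omega
    have := List.pairwise_iff_getElem.mp hp _ _ hj hi hlt
    omega

lemma shiftedDiagram_finite (s : Finset ℕ) : (shiftedDiagram s).Finite := by
  apply Set.Finite.subset ((Set.finite_Icc 1 s.card).prod (Set.finite_Icc 1 (s.card + s.sup id)))
  intro c hc
  obtain ⟨h1, h2, h3⟩ := hc
  have hpos : 0 < nthPart s c.1 := by omega
  have hcard := nthPart_pos_le_card s c.1 hpos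
  have hsup := nthPart_le_sup s c.1
  exact ⟨Set.mem_Icc.mpr ⟨h1, hcard⟩, Set.mem_Icc.mpr ⟨by omega, by omega⟩⟩

/-- The set of rows containing a cell of diagonal value `d`. -/
def rowSet (s : Finset ℕ) (d : ℕ) : Set ℕ := {i | 1 ≤ i ∧ d ≤ nthPart s i}

lemma rowSet_finite (s : Finset ℕ) {d : ℕ} (hd : 1 ≤ d) : (rowSet s d).Finite := by
  apply Set.Finite.subset (Set.finite_Icc 1 s.card)
  rintro i ⟨h1, h2⟩
  exact Set.mem_Icc.mpr ⟨h1, nthPart_pos_le_card s i (by omega)⟩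

/-- The cell in row `i` of diagonal value `d`. -/
def rowCell (i d : ℕ) : ℕ × ℕ := (i, i + d - 1)

lemma diagVal_rowCell {i d : ℕ} (hd : 1 ≤ d) : diagVal (rowCell i d) = d := by
  simp only [diagVal, rowCell]; omega

lemma rowCell_mem_iff (s : Finset ℕ) {i d : ℕ} (hd : 1 ≤ d) :
    rowCell i d ∈ shiftedDiagram s ↔ i ∈ rowSet s d := by
  simp only [shiftedDiagram, rowCell, rowSet, Set.mem_setOf_eq]
  constructor
  · rintro ⟨h1, h2, h3⟩; exact ⟨h1, by omega⟩
  · rintro ⟨h1, h2⟩; refine ⟨h1, by omega, by omega⟩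

lemma eq_rowCell_of_mem (s : Finset ℕ) {c : ℕ × ℕ} (hc : c ∈ shiftedDiagram s) :
    c = rowCell c.1 (diagVal c) ∧ 1 ≤ diagVal c := by
  obtain ⟨h1, h2, h3⟩ := hc
  simp only [diagVal, rowCell]
  refine ⟨Prod.ext rfl ?_, by omega⟩
  show c.2 = c.1 + (c.2 + 1 - c.1) - 1
  omega

lemma adj_diag {lam : Finset ℕ} {x y : ℕ × ℕ} (hx : x ∈ shiftedDiagram lam)
    (hy : y ∈ shiftedDiagram lam) (hadj : CellAdj x y) : diagVal y ≤ diagVal x + 1 := by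
  obtain ⟨_, hx2, _⟩ := hx
  obtain ⟨_, hy2, _⟩ := hy
  simp only [diagVal]
  rcases hadj with ⟨h1, h2 | h2⟩ | ⟨h1, h2 | h2⟩ <;> omega

lemma diag_image_eq (lam : Finset ℕ) (T : Set (ℕ × ℕ)) (hsub : T ⊆ shiftedDiagram lam)
    (hconn : EdgeConnected T) (hinj : Set.InjOn diagVal T)
    (a : ℕ) (htail : IsTail T (a, a)) :
    diagVal '' T = Set.Icc 1 T.ncard := by
  have hTfin : T.Finite := (shiftedDiagram_finite lam).subset hsub
  have hmem : (a, a) ∈ T := htail.1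
  have hdaa : diagVal (a, a) = 1 := by simp [diagVal]
  have hge1 : ∀ c ∈ T, 1 ≤ diagVal c := fun c hc => hdaa ▸ htail.2 c hc
  have hivt : ∀ c, Relation.ReflTransGen (fun x y => CellAdj x y ∧ x ∈ T ∧ y ∈ T) (a, a) c →
      ∀ m, 1 ≤ m → m ≤ diagVal c → m ∈ diagVal '' T := by
    intro c hpath
    induction hpath with
    | refl =>
      intro m h1 h2
      rw [hdaa] at h2
      have : m = 1 := by omega
      exact ⟨(a, a), hmem, by rw [hdaa, this]⟩
    | tail _ hstep ih =>
      rename_i b c' _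
      obtain ⟨hadj, hbT, hcT⟩ := hstep
      have hle : diagVal c' ≤ diagVal b + 1 := adj_diag (hsub hbT) (hsub hcT) hadj
      intro m h1 h2
      by_cases hm : m ≤ diagVal b
      · exact ih m h1 hm
      · have : m = diagVal c' := by omega
        exact ⟨c', hcT, this.symm⟩
  have hDfin : (diagVal '' T).Finite := hTfin.image _
  have hDne : (diagVal '' T).Nonempty := ⟨diagVal (a, a), Set.mem_image_of_mem _ hmem⟩
  obtain ⟨M, hMD, hmax⟩ := Set.Finite.exists_maximalFor id _ hDfin hDne
  have hub : ∀ x ∈ diagVal '' T, x ≤ M := by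
    intro x hx
    rcases le_total x M with h | h
    · exact h
    · exact hmax hx h
  have hDeq : diagVal '' T = Set.Icc 1 M := by
    apply Set.Subset.antisymm
    · rintro x ⟨c, hc, rfl⟩
      exact Set.mem_Icc.mpr ⟨hge1 c hc, hub _ ⟨c, hc, rfl⟩⟩
    · intro m hm
      obtain ⟨hm1, hm2⟩ := Set.mem_Icc.mp hm
      obtain ⟨c, hc, hcd⟩ := hMD
      exact hivt c (hconn (a, a) hmem c hc) m hm1 (by omega)
  have hcard : (diagVal '' T).ncard = T.ncard := Set.ncard_image_of_injOn hinj
  have hMcard : (Set.Icc 1 M).ncard = M := by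
    rw [← Finset.coe_Icc, Set.ncard_coe_finset, Nat.card_Icc]; omega
  rw [hDeq] at hcard ⊢
  rw [hMcard] at hcard
  rw [hcard]

end Stmt3Aux

/-- In any removable double ribbon with components `R` and `S`
(`|R| ≥ |S|`), one in fact has `|R| > |S|`: `k` cannot split as `(t, t)`. -/
theorem stmt3 (lam nu : Finset ℕ) (R S : Set (ℕ × ℕ))
    (h : IsDoubleDecomp lam nu R S) :
    S.ncard < R.ncard := by
  obtain ⟨hlam, hnu, hsubnu, hdisj, hunion, hRne, hRconn, hRinj, hSne, hSconn, hSinj, hle,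
    ⟨a, ha⟩, ⟨b, hb⟩, -⟩ := h
  by_contra hlt
  have heq : S.ncard = R.ncard := le_antisymm hle (not_lt.mp hlt)
  have hskew : R ∪ S ⊆ shiftedDiagram lam := by
    rw [hunion]; exact Set.diff_subset
  have hRsub : R ⊆ shiftedDiagram lam := fun c hc => hskew (Or.inl hc)
  have hSsub : S ⊆ shiftedDiagram lam := fun c hc => hskew (Or.inr hc)
  have hRfin : R.Finite := (shiftedDiagram_finite lam).subset hRsub
  have hSfin : S.Finite := (shiftedDiagram_finite lam).subset hSsub
  set t := R.ncard with ht
  have ht1 : 1 ≤ t := by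
    rw [ht]; exact (Set.ncard_pos hRfin).mpr hRne
  have himR : diagVal '' R = Set.Icc 1 t := diag_image_eq lam R hRsub hRconn hRinj a ha
  have himS : diagVal '' S = Set.Icc 1 t := by
    have := diag_image_eq lam S hSsub hSconn hSinj b hb
    rwa [heq] at this
  have hnueq : shiftedDiagram nu = shiftedDiagram lam \ (R ∪ S) := by
    rw [hunion]
    exact (Set.diff_diff_cancel_left hsubnu).symm
  obtain ⟨cR, hcR, hcRd⟩ : ∃ c ∈ R, diagVal c = t := by
    have : t ∈ diagVal '' R := by rw [himR]; exact Set.mem_Icc.mpr ⟨ht1, le_refl t⟩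
    obtain ⟨c, hc, hcd⟩ := this
    exact ⟨c, hc, hcd⟩
  obtain ⟨cS, hcS, hcSd⟩ : ∃ c ∈ S, diagVal c = t := by
    have : t ∈ diagVal '' S := by rw [himS]; exact Set.mem_Icc.mpr ⟨ht1, le_refl t⟩
    obtain ⟨c, hc, hcd⟩ := this
    exact ⟨c, hc, hcd⟩
  have hcRcell : cR = rowCell cR.1 t := by
    have := (eq_rowCell_of_mem lam (hRsub hcR)).1
    rwa [hcRd] at this
  have hcScell : cS = rowCell cS.1 t := by
    have := (eq_rowCell_of_mem lam (hSsub hcS)).1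
    rwa [hcSd] at this
  have hiRA : cR.1 ∈ rowSet lam t := by
    apply (rowCell_mem_iff lam ht1).mp
    rw [← hcRcell]; exact hRsub hcR
  have hiSA : cS.1 ∈ rowSet lam t := by
    apply (rowCell_mem_iff lam ht1).mp
    rw [← hcScell]; exact hSsub hcS
  have hneRS : cR.1 ≠ cS.1 := by
    intro hcc
    have hce : cR = cS := by rw [hcRcell, hcScell, hcc]
    exact (Set.disjoint_left.mp hdisj hcR) (hce ▸ hcS)
  -- row sets at diagonal t and t+1
  have hB : rowSet nu t = rowSet lam t \ {cR.1, cS.1} := by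
    ext i
    constructor
    · intro hi
      have hcell : rowCell i t ∈ shiftedDiagram nu := (rowCell_mem_iff nu ht1).mpr hi
      rw [hnueq] at hcell
      obtain ⟨hmem, hnotRS⟩ := hcell
      refine ⟨(rowCell_mem_iff lam ht1).mp hmem, ?_⟩
      simp only [Set.mem_insert_iff, Set.mem_singleton_iff]
      push_neg
      constructor
      · intro hiR
        exact hnotRS (Or.inl (by rw [hiR, ← hcRcell]; exact hcR))
      · intro hiS
        exact hnotRS (Or.inr (by rw [hiS, ← hcScell]; exact hcS))
    · rintro ⟨hiA, hins⟩
      simp only [Set.mem_insert_iff, Set.mem_singleton_iff] at hins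
      push_neg at hins
      apply (rowCell_mem_iff nu ht1).mp
      rw [hnueq]
      refine ⟨(rowCell_mem_iff lam ht1).mpr hiA, ?_⟩
      rintro (hR | hS)
      · have hce : rowCell i t = cR := hRinj hR hcR (by rw [diagVal_rowCell ht1, hcRd])
        exact hins.1 (by rw [← hce]; rfl)
      · have hce : rowCell i t = cS := hSinj hS hcS (by rw [diagVal_rowCell ht1, hcSd])
        exact hins.2 (by rw [← hce]; rfl)
  have hB' : rowSet nu (t + 1) = rowSet lam (t + 1) := by
    have ht1' : (1 : ℕ) ≤ t + 1 := by omega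
    ext i
    have hc : rowCell i (t + 1) ∉ R ∪ S := by
      rintro (hR | hS)
      · have hx : diagVal (rowCell i (t + 1)) ∈ diagVal '' R := Set.mem_image_of_mem _ hR
        rw [himR, diagVal_rowCell ht1'] at hx
        exact absurd (Set.mem_Icc.mp hx).2 (by omega)
      · have hx : diagVal (rowCell i (t + 1)) ∈ diagVal '' S := Set.mem_image_of_mem _ hS
        rw [himS, diagVal_rowCell ht1'] at hx
        exact absurd (Set.mem_Icc.mp hx).2 (by omega)
    constructor
    · intro hi
      have hcell := (rowCell_mem_iff nu ht1').mpr hi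
      rw [hnueq] at hcell
      exact (rowCell_mem_iff lam ht1').mp hcell.1
    · intro hi
      apply (rowCell_mem_iff nu ht1').mp
      rw [hnueq]
      exact ⟨(rowCell_mem_iff lam ht1').mpr hi, hc⟩
  -- cardinalities
  have hAfin := rowSet_finite lam ht1
  have hA'fin : (rowSet lam (t + 1)).Finite := rowSet_finite lam (by omega)
  have hBfin := rowSet_finite nu ht1
  have hpairsub : ({cR.1, cS.1} : Set ℕ) ⊆ rowSet lam t := by
    intro x hx
    rcases hx with rfl | hx
    · exact hiRA
    · rw [Set.mem_singleton_iff] at hx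
      rw [hx]; exact hiSA
  have hcard1 : (rowSet lam t \ {cR.1, cS.1}).ncard = (rowSet lam t).ncard - 2 := by
    rw [Set.ncard_diff hpairsub ((Set.finite_singleton cS.1).insert cR.1),
      Set.ncard_pair hneRS]
  have hge2 : 2 ≤ (rowSet lam t).ncard := by
    rw [← Set.ncard_pair hneRS]
    exact Set.ncard_le_ncard hpairsub hAfin
  have hsub1 : rowSet nu (t + 1) ⊆ rowSet nu t := by
    rintro i ⟨h1, h2⟩
    exact ⟨h1, by omega⟩
  have hle1 : (rowSet nu (t + 1)).ncard ≤ (rowSet nu t).ncard := Set.ncard_le_ncard hsub1 hBfin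
  -- at most one row drops out between diagonal t and t+1 in lam
  have hss : (rowSet lam t \ rowSet lam (t + 1)).ncard ≤ 1 := by
    have hsing : ∀ x ∈ rowSet lam t \ rowSet lam (t + 1),
        ∀ y ∈ rowSet lam t \ rowSet lam (t + 1), x = y := by
      rintro x ⟨⟨hx1, hx2⟩, hx3⟩ y ⟨⟨hy1, hy2⟩, hy3⟩
      simp only [rowSet, Set.mem_setOf_eq, not_and, not_le] at hx3 hy3
      have hx4 := hx3 hx1
      have hy4 := hy3 hy1
      have hxe : nthPart lam x = t := by omega
      have hye : nthPart lam y = t := by omega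
      have := nthPart_injOn lam (i := x) (j := y) (by omega) (by rw [hxe, hye])
      omega
    rcases Set.eq_empty_or_nonempty (rowSet lam t \ rowSet lam (t + 1)) with he | ⟨x, hx⟩
    · rw [he]; simp
    · have hsub : rowSet lam t \ rowSet lam (t + 1) ⊆ {x} := fun y hy => hsing y hy x hx
      calc (rowSet lam t \ rowSet lam (t + 1)).ncard ≤ ({x} : Set ℕ).ncard :=
            Set.ncard_le_ncard hsub (Set.finite_singleton x)
        _ = 1 := Set.ncard_singleton x
  have hle2 : (rowSet lam t).ncard ≤ (rowSet lam (t + 1)).ncard + 1 := by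
    have hcover : rowSet lam t ⊆ rowSet lam (t + 1) ∪ (rowSet lam t \ rowSet lam (t + 1)) := by
      intro x hx
      by_cases hx' : x ∈ rowSet lam (t + 1)
      · exact Or.inl hx'
      · exact Or.inr ⟨hx, hx'⟩
    calc (rowSet lam t).ncard
        ≤ (rowSet lam (t + 1) ∪ (rowSet lam t \ rowSet lam (t + 1))).ncard :=
          Set.ncard_le_ncard hcover (hA'fin.union (hAfin.diff))
      _ ≤ (rowSet lam (t + 1)).ncard + (rowSet lam t \ rowSet lam (t + 1)).ncard :=
          Set.ncard_union_le _ _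
      _ ≤ (rowSet lam (t + 1)).ncard + 1 := by omega
  have hfin1 : (rowSet nu t).ncard = (rowSet lam t).ncard - 2 := by rw [hB, hcard1]
  have hfin2 : (rowSet nu (t + 1)).ncard = (rowSet lam (t + 1)).ncard := by rw [hB']
  omega
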